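/- Let ρ = Σᵢ ξᵢξᵢ† (i = 1,…,k) be an n-qubit positive semidefinite matrix of rank k with ξ₁,…,ξ_k linearly independent. If the Lorentz invariant I_ρ = Tr(ρᵀ ε_n ρ ε_n) = 0, then k ≤ 2^{n-1}. -/

import Mathlib

open Matrix Module

noncomputable def eps : Matrix (Fin 2) (Fin 2) ℂ := !![0, 1; -1, 0]

noncomputable def epsPow (n : ℕ) : Matrix (Fin n → Fin 2) (Fin n → Fin 2) ℂ :=
  Matrix.of fun i j => ∏ k, eps (i k) (j k)

lemma eps_swap (a b : Fin 2) : eps b a = - eps a b := by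
  fin_cases a <;> fin_cases b <;> simp [eps]

lemma eps_conj (a b : Fin 2) : (starRingEnd ℂ) (eps a b) = eps a b := by
  fin_cases a <;> fin_cases b <;> simp [eps]

lemma eps_mul_eps (a b : Fin 2) : (∑ c, eps a c * eps c b) = if a = b then -1 else 0 := by
  fin_cases a <;> fin_cases b <;> simp [eps, Fin.sum_univ_two]

lemma epsPow_transpose (n : ℕ) : (epsPow n)ᵀ = ((-1 : ℂ) ^ n) • epsPow n := by
  ext i j
  simp only [transpose_apply, epsPow, of_apply, Matrix.smul_apply, smul_eq_mul]
  calc ∏ x, eps (j x) (i x) = ∏ x, (-1 : ℂ) * eps (i x) (j x) := by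
        refine Finset.prod_congr rfl fun x _ => ?_
        rw [eps_swap]; ring
    _ = _ := by rw [Finset.prod_mul_distrib, Finset.prod_const]; simp

lemma epsPow_conj (n : ℕ) (a b : Fin n → Fin 2) :
    (starRingEnd ℂ) (epsPow n a b) = epsPow n a b := by
  simp only [epsPow, of_apply, map_prod, eps_conj]

lemma epsPow_mul_self (n : ℕ) :
    epsPow n * epsPow n = ((-1 : ℂ) ^ n) • (1 : Matrix (Fin n → Fin 2) (Fin n → Fin 2) ℂ) := by
  ext i j
  simp only [mul_apply, epsPow, of_apply]
  calc ∑ c : Fin n → Fin 2, (∏ x, eps (i x) (c x)) * ∏ x, eps (c x) (j x)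
      = ∑ c : Fin n → Fin 2, ∏ x, (eps (i x) (c x) * eps (c x) (j x)) := by
        exact Finset.sum_congr rfl fun c _ => (Finset.prod_mul_distrib).symm
    _ = ∏ x, ∑ y : Fin 2, eps (i x) y * eps y (j x) := (Fintype.prod_sum (fun x y => eps (i x) y * eps y (j x))).symm
    _ = ∏ x, (if i x = j x then (-1 : ℂ) else 0) :=
        Finset.prod_congr rfl fun x _ => eps_mul_eps _ _
    _ = (((-1 : ℂ) ^ n) • (1 : Matrix (Fin n → Fin 2) (Fin n → Fin 2) ℂ)) i j := by
        by_cases h : i = j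
        · subst h; simp
        · obtain ⟨x, hx⟩ := Function.ne_iff.mp h
          rw [Finset.prod_eq_zero (Finset.mem_univ x) (by simp [hx])]
          simp [one_apply_ne h]

lemma epsPow_mulVec_inj (n : ℕ) : Function.Injective ((epsPow n).mulVec) := by
  intro v w h
  have h2 : (epsPow n * epsPow n) *ᵥ v = (epsPow n * epsPow n) *ᵥ w := by
    rw [← mulVec_mulVec, ← mulVec_mulVec, h]
  rw [epsPow_mul_self, smul_mulVec, smul_mulVec, one_mulVec, one_mulVec] at h2
  exact smul_right_injective _ (pow_ne_zero n (by norm_num : (-1 : ℂ) ≠ 0)) h2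

example : True := trivial

section Trace
variable {ι : Type*} [Fintype ι]

omit [Fintype ι] in
lemma vecMulVec_transpose'' (a b : ι → ℂ) : (vecMulVec a b)ᵀ = vecMulVec b a := by
  ext i j; simp [vecMulVec_apply, mul_comm]

lemma vecMulVec_mulVec' (c d w : ι → ℂ) : vecMulVec c d *ᵥ w = (d ⬝ᵥ w) • c := by
  funext x
  simp only [mulVec, dotProduct, vecMulVec_apply, Pi.smul_apply, smul_eq_mul, Finset.sum_mul]
  exact Finset.sum_congr rfl fun y _ => by ring

lemma trace_vecMulVec_mul (a b : ι → ℂ) (M : Matrix ι ι ℂ) :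
    (vecMulVec a b * M).trace = b ⬝ᵥ (M *ᵥ a) := by
  simp only [trace, diag, mul_apply, vecMulVec_apply, dotProduct, mulVec]
  rw [Finset.sum_comm]
  refine Finset.sum_congr rfl fun y _ => ?_
  rw [Finset.mul_sum]
  exact Finset.sum_congr rfl fun x _ => by ring

lemma trace_term (a b c d : ι → ℂ) (M : Matrix ι ι ℂ) :
    (vecMulVec a b * M * vecMulVec c d * M).trace
      = (d ⬝ᵥ (M *ᵥ a)) * (b ⬝ᵥ (M *ᵥ c)) := by
  rw [mul_assoc, mul_assoc, trace_vecMulVec_mul, ← mulVec_mulVec, ← mulVec_mulVec,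
    vecMulVec_mulVec', mulVec_smul, dotProduct_smul]
  simp [mul_comm]

end Trace

theorem stmt5 (n k : ℕ) (ξ : Fin k → (Fin n → Fin 2) → ℂ)
    (hli : LinearIndependent ℂ ξ)
    (hI : (((∑ i, vecMulVec (ξ i) (star (ξ i)))ᵀ * epsPow n *
        (∑ i, vecMulVec (ξ i) (star (ξ i))) * epsPow n).trace) = 0) :
    k ≤ 2 ^ (n - 1) := by
  classical
  have hconjmul : ∀ v : (Fin n → Fin 2) → ℂ,
      epsPow n *ᵥ (star v) = star (epsPow n *ᵥ v) := by
    intro v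
    funext x
    simp only [mulVec, dotProduct, Pi.star_apply, star_sum, star_mul']
    refine Finset.sum_congr rfl fun y _ => ?_
    have h' : star (epsPow n x y) = epsPow n x y := by
      rw [← starRingEnd_apply]; exact epsPow_conj n x y
    rw [h']
  have hflip : ∀ i j, ξ j ⬝ᵥ (epsPow n *ᵥ ξ i) = (-1 : ℂ) ^ n * (ξ i ⬝ᵥ (epsPow n *ᵥ ξ j)) := by
    intro i j
    rw [dotProduct_mulVec, ← mulVec_transpose, epsPow_transpose, smul_mulVec,
      smul_dotProduct, dotProduct_comm]
    rfl
  -- reduce the trace to a double sum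
  have htr : ((∑ i, vecMulVec (ξ i) (star (ξ i)))ᵀ * epsPow n *
        (∑ i, vecMulVec (ξ i) (star (ξ i))) * epsPow n).trace
      = ∑ i, ∑ j, (star (ξ j) ⬝ᵥ (epsPow n *ᵥ star (ξ i))) * (ξ i ⬝ᵥ (epsPow n *ᵥ ξ j)) := by
    rw [transpose_sum]
    simp only [vecMulVec_transpose'', Finset.sum_mul, Finset.mul_sum, trace_sum]
    rw [Finset.sum_comm]
    refine Finset.sum_congr rfl fun i _ => Finset.sum_congr rfl fun j _ => ?_
    rw [trace_term]
  have htr2 : ∀ i j, (star (ξ j) ⬝ᵥ (epsPow n *ᵥ star (ξ i))) * (ξ i ⬝ᵥ (epsPow n *ᵥ ξ j))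
      = ((-1 : ℂ) ^ n) * (Complex.normSq (ξ i ⬝ᵥ (epsPow n *ᵥ ξ j)) : ℂ) := by
    intro i j
    rw [hconjmul, star_dotProduct_star, dotProduct_comm]
    conv_lhs => rw [hflip i j]
    rw [star_mul', star_pow, star_neg, star_one, mul_assoc, ← starRingEnd_apply,
      ← Complex.normSq_eq_conj_mul_self]
  have hns : ∑ i, ∑ j, (Complex.normSq (ξ i ⬝ᵥ (epsPow n *ᵥ ξ j)) : ℂ) = 0 := by
    have h1 : ((-1 : ℂ) ^ n) *
        ∑ i, ∑ j, (Complex.normSq (ξ i ⬝ᵥ (epsPow n *ᵥ ξ j)) : ℂ) = 0 := by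
      rw [Finset.mul_sum]
      simp_rw [Finset.mul_sum, ← htr2]
      rw [← htr]; exact hI
    exact (mul_eq_zero.mp h1).resolve_left (pow_ne_zero n (by norm_num))
  have hc0 : ∀ i j, ξ i ⬝ᵥ (epsPow n *ᵥ ξ j) = 0 := by
    have hr : ∑ i, ∑ j, Complex.normSq (ξ i ⬝ᵥ (epsPow n *ᵥ ξ j)) = 0 := by
      have := congrArg Complex.re hns
      simpa using this
    intro i j
    have h1 : ∀ i ∈ Finset.univ, (0:ℝ) ≤ ∑ j, Complex.normSq (ξ i ⬝ᵥ (epsPow n *ᵥ ξ j)) :=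
      fun i _ => Finset.sum_nonneg fun j _ => Complex.normSq_nonneg _
    have h2 := (Finset.sum_eq_zero_iff_of_nonneg h1).mp hr i (Finset.mem_univ i)
    have h3 := (Finset.sum_eq_zero_iff_of_nonneg
      (fun j _ => Complex.normSq_nonneg _)).mp h2 j (Finset.mem_univ j)
    exact Complex.normSq_eq_zero.mp h3
  -- linear algebra
  let A : Matrix (Fin k) (Fin n → Fin 2) ℂ := Matrix.of ξ
  have hArank : A.rank = k := by
    have : LinearIndependent ℂ (A : Fin k → (Fin n → Fin 2) → ℂ) := hli
    rw [this.rank_matrix, Fintype.card_fin]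
  have hcard : finrank ℂ ((Fin n → Fin 2) → ℂ) = 2 ^ n := by
    rw [finrank_pi]
    simp
  have hrangetop : LinearMap.range A.mulVecLin = ⊤ := by
    apply Submodule.eq_top_of_finrank_eq
    rw [← Matrix.rank, hArank, finrank_pi, Fintype.card_fin]
  have hker : finrank ℂ (LinearMap.ker A.mulVecLin) = 2 ^ n - k := by
    have h := LinearMap.finrank_range_add_finrank_ker A.mulVecLin
    rw [hrangetop, finrank_top, finrank_pi, Fintype.card_fin, hcard] at h
    omega
  have hspanle : Submodule.span ℂ (Set.range fun j => epsPow n *ᵥ ξ j)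
      ≤ LinearMap.ker A.mulVecLin := by
    rw [Submodule.span_le]
    rintro _ ⟨j, rfl⟩
    simp only [SetLike.mem_coe, LinearMap.mem_ker, Matrix.mulVecLin_apply]
    funext i
    exact hc0 i j
  have hliE : LinearIndependent ℂ (fun j => epsPow n *ᵥ ξ j) := by
    have heq : (fun j => epsPow n *ᵥ ξ j) = ((epsPow n).mulVecLin) ∘ ξ := rfl
    rw [heq]
    exact hli.map' (epsPow n).mulVecLin (LinearMap.ker_eq_bot.mpr (epsPow_mulVec_inj n))
  have hk1 : k = finrank ℂ (Submodule.span ℂ (Set.range fun j => epsPow n *ᵥ ξ j)) := by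
    rw [finrank_span_eq_card hliE, Fintype.card_fin]
  have hkle : k ≤ 2 ^ n - k := by
    have hm := Submodule.finrank_mono hspanle
    rw [hker] at hm
    rw [← hk1] at hm
    exact hm
  have h2k : 2 * k ≤ 2 ^ n := by
    have hkle2n : k ≤ 2 ^ n := le_trans hkle (Nat.sub_le _ _)
    omega
  cases n with
  | zero => norm_num at h2k ⊢; omega
  | succ m =>
    have h : 2 * k ≤ 2 * 2 ^ m := by rw [pow_succ] at h2k; omega
    simpa using Nat.le_of_mul_le_mul_left h (by norm_num)
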